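/- Let F be a field, let k ≥ 1, let e : Fin k → ℤ be strictly monotone (integers e_1 < e_2 < ⋯ < e_k), let K := FractionField (MvPolynomial (Fin k) F), and let α_j ∈ K be the image of the variable X_j for j = 1,…,k. Then the generalized Vandermonde matrix M ∈ K^{k×k} with entries M_{i,j} := α_j^{e_i} (integer powers of the nonzero elements α_j) has nonzero determinant. -/

import Mathlib

open Finset Matrix

noncomputable section

/-- The intersection `⋂_{j ∈ p} A j`, as a `Finset (Fin n)`. -/
def interSet {ℓ n : ℕ} (A : Fin ℓ → Finset (Fin n)) (p : Finset (Fin ℓ)) : Finset (Fin n) :=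
  Finset.univ.filter fun x => ∀ j ∈ p, x ∈ A j

/-- The dimension-`m` null intersection property: for every partition of `{1,…,ℓ}`
(presented as a `Finpartition` of `Finset.univ : Finset (Fin ℓ)`) into nonempty parts
`P_1,…,P_s`, we have `Σ_i |⋂_{j ∈ P_i} A_j| ≤ (s-1)·m`. -/
def NullInter {ℓ n : ℕ} (m : ℕ) (A : Fin ℓ → Finset (Fin n)) : Prop :=
  ∀ P : Finpartition (Finset.univ : Finset (Fin ℓ)),
    ∑ p ∈ P.parts, (interSet A p).card ≤ (P.parts.card - 1) * m

/-- Span of the columns of `M` indexed by `A`. -/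
def colSpan {K : Type*} [Field K] {k n : ℕ} (M : Matrix (Fin k) (Fin n) K)
    (A : Finset (Fin n)) : Submodule K (Fin k → K) :=
  Submodule.span K ((fun j i => M i j) '' (A : Set (Fin n)))

/-- Span of the first `σ` columns of `M`. -/
def colSpanLT {K : Type*} [Field K] {k b : ℕ} (M : Matrix (Fin k) (Fin b) K)
    (σ : ℕ) : Submodule K (Fin k → K) :=
  Submodule.span K ((fun j i => M i j) '' {j : Fin b | (j : ℕ) < σ})

/-- The minimum of `σ` over the set `p` (for nonempty `p`, this is `min_{j ∈ p} σ j`). -/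
def partMin {ℓ : ℕ} (σ : Fin ℓ → ℕ) (p : Finset (Fin ℓ)) : ℕ :=
  sInf (σ '' (p : Set (Fin ℓ)))

/-- The generic intersection dimension `gid_m((σ_i, A_i)_i)`: the maximum over all
partitions of `{1,…,ℓ}` into nonempty parts `P_1,…,P_s` of
`-m(s-1) + Σ_i (min_{j ∈ P_i} σ_j + |⋂_{j ∈ P_i} A_j|)`. -/
def gid {ℓ n : ℕ} (m : ℕ) (σ : Fin ℓ → ℕ) (A : Fin ℓ → Finset (Fin n)) : ℤ :=
  sSup { v : ℤ | ∃ P : Finpartition (Finset.univ : Finset (Fin ℓ)),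
    v = -(m : ℤ) * ((P.parts.card : ℤ) - 1)
      + ∑ p ∈ P.parts, ((partMin σ p : ℤ) + ((interSet A p).card : ℤ)) }

open MvPolynomial Equiv

lemma det_X_pow_ne_zero (F : Type*) [Field F] (k : ℕ) (d : Fin k → ℕ)
    (hd : Function.Injective d) :
    (Matrix.of fun i j : Fin k => (X j : MvPolynomial (Fin k) F) ^ d i).det ≠ 0 := by
  classical
  set w : Perm (Fin k) → (Fin k →₀ ℕ) :=
    fun σ => Finsupp.equivFunOnFinite.symm fun i => d (σ i) with hw
  have hwinj : Function.Injective w := by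
    intro σ τ h
    have h2 := Finsupp.equivFunOnFinite.symm.injective h
    ext i
    exact congrArg Fin.val (hd (congrFun h2 i))
  have hwapp : ∀ σ i, w σ i = d (σ i) := fun σ i => rfl
  have hc : coeff (w 1)
      ((Matrix.of fun i j : Fin k => (X j : MvPolynomial (Fin k) F) ^ d i).det) = 1 := by
    rw [Matrix.det_apply, MvPolynomial.coeff_sum]
    have step : ∀ σ : Perm (Fin k),
        coeff (w 1) (Equiv.Perm.sign σ •
          ∏ i, (Matrix.of fun i j : Fin k => (X j : MvPolynomial (Fin k) F) ^ d i) (σ i) i)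
          = if σ = 1 then 1 else 0 := by
      intro σ
      have h1 : (∏ i, (Matrix.of fun i j : Fin k =>
          (X j : MvPolynomial (Fin k) F) ^ d i) (σ i) i) = monomial (w σ) 1 := by
        have h0 : (∏ i, (X i : MvPolynomial (Fin k) F) ^ (w σ) i) = monomial (w σ) 1 := by
          rw [← prod_X_pow_eq_monomial]
          refine (Finset.prod_subset (Finset.subset_univ _) ?_).symm
          intro x _ hx
          rw [Finsupp.notMem_support_iff.mp hx, pow_zero]
        rw [← h0]
        rfl
      rw [h1, Units.smul_def, MvPolynomial.coeff_smul, coeff_monomial]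
      by_cases h : σ = 1
      · subst h; simp
      · rw [if_neg (fun hh => h (hwinj hh)), if_neg h]; simp
    rw [Finset.sum_congr rfl fun σ _ => step σ]
    simp
  intro h
  rw [h] at hc
  simp at hc

/-- The generalized Vandermonde determinant with generic entries and strictly
increasing integer exponents is nonzero. -/
theorem generalized_vandermonde_det_ne_zero
    (F : Type*) [Field F] (k : ℕ) (hk : 1 ≤ k) (e : Fin k → ℤ) (he : StrictMono e) :
    (Matrix.of fun i j : Fin k =>
      (algebraMap (MvPolynomial (Fin k) F) (FractionRing (MvPolynomial (Fin k) F))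
        (MvPolynomial.X j)) ^ (e i)).det ≠ 0 := by
  classical
  set R := MvPolynomial (Fin k) F with hR
  set K := FractionRing R with hK
  set α : Fin k → K := fun j => algebraMap R K (X j) with hα
  have hα0 : ∀ j, α j ≠ 0 := by
    intro j
    simp only [hα, ne_eq, map_eq_zero_iff _ (IsFractionRing.injective R K)]
    exact MvPolynomial.X_ne_zero j
  set i0 : Fin k := ⟨0, hk⟩ with hi0
  have hle : ∀ i, e i0 ≤ e i := fun i => he.monotone (show i0 ≤ i by rw [Fin.le_def]; exact Nat.zero_le _)
  set d : Fin k → ℕ := fun i => (e i - e i0).toNat with hdd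
  have hdz : ∀ i, (d i : ℤ) = e i - e i0 := fun i =>
    Int.toNat_of_nonneg (sub_nonneg.mpr (hle i))
  have hdinj : Function.Injective d := by
    intro i i' h
    apply he.injective
    have h1 := hdz i
    have h2 := hdz i'
    rw [h] at h1
    omega
  have key : ∀ i j, α j ^ (e i) = α j ^ (e i0) * (α j ^ d i) := by
    intro i j
    rw [← zpow_natCast (α j) (d i), ← zpow_add₀ (hα0 j)]
    congr 1
    rw [hdz]
    ring
  have hdet : (Matrix.of fun i j : Fin k => α j ^ e i).det
      = (∏ j, α j ^ e i0) * (Matrix.of fun i j : Fin k => α j ^ (d i)).det := by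
    rw [← Matrix.det_mul_row (fun j => α j ^ e i0)]
    congr 1
    ext i j
    exact key i j
  have hmap : (Matrix.of fun i j : Fin k => α j ^ (d i))
      = (Matrix.of fun i j : Fin k => (X j : R) ^ d i).map (algebraMap R K) := by
    ext i j
    simp [hα]
  have hd2 : (Matrix.of fun i j : Fin k => α j ^ (d i)).det ≠ 0 := by
    rw [hmap, ← RingHom.mapMatrix_apply, ← RingHom.map_det]
    simp only [ne_eq, map_eq_zero_iff _ (IsFractionRing.injective R K)]
    exact det_X_pow_ne_zero F k d hdinj
  show (Matrix.of fun i j : Fin k => α j ^ e i).det ≠ 0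
  rw [hdet]
  exact mul_ne_zero (Finset.prod_ne_zero_iff.mpr fun j _ => zpow_ne_zero _ (hα0 j)) hd2
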